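/- Let G be a finite simple bipartite graph with at least one edge. Then G is χ-unfrozen if and only if G contains no P_3 as an induced subgraph. Moreover, under the same hypotheses, G is ω-unfrozen if and only if G contains no P_3 as an induced subgraph. -/

import Mathlib

open SimpleGraph

/-- The independence number of a graph: the maximum size of an independent set. -/
noncomputable def indNum {V : Type*} (G : SimpleGraph V) : ℕ :=
  sSup {n | ∃ s : Finset V, (∀ a ∈ s, ∀ b ∈ s, a ≠ b → ¬ G.Adj a b) ∧ s.card = n}

/-- The vertex cover number of a graph: the minimum size of a vertex cover. -/
noncomputable def covNum {V : Type*} (G : SimpleGraph V) : ℕ :=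
  sInf {n | ∃ s : Finset V, (∀ a b : V, G.Adj a b → a ∈ s ∨ b ∈ s) ∧ s.card = n}

/-- The clique number of a graph: the maximum size of a clique. -/
noncomputable def clNum {V : Type*} (G : SimpleGraph V) : ℕ :=
  sSup {n | ∃ s : Finset V, G.IsNClique n s}

/-- The graph obtained from `G` by adding the edge `{u, v}`. -/
def adjoinEdge {V : Type*} (G : SimpleGraph V) (u v : V) : SimpleGraph V :=
  G ⊔ SimpleGraph.fromEdgeSet {s(u, v)}

/-- `G` contains the path `P₃` as an induced subgraph. -/
def HasInducedP3 {V : Type*} (G : SimpleGraph V) : Prop :=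
  ∃ u v w : V, u ≠ v ∧ v ≠ w ∧ u ≠ w ∧ G.Adj u v ∧ G.Adj v w ∧ ¬ G.Adj u w

/-- `G` is bipartite: its vertex set can be partitioned into two sets such that
every edge joins a vertex of one set to a vertex of the other. -/
def IsBipartite {V : Type*} (G : SimpleGraph V) : Prop :=
  ∃ s : Set V, ∀ ⦃a b : V⦄, G.Adj a b → (a ∈ s ∧ b ∉ s) ∨ (a ∉ s ∧ b ∈ s)

lemma adjoinEdge_adj {V : Type*} (G : SimpleGraph V) (u v a b : V) :
    (adjoinEdge G u v).Adj a b ↔ G.Adj a b ∨ (a ≠ b ∧ ((a = u ∧ b = v) ∨ (a = v ∧ b = u))) := by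
  simp [adjoinEdge, Sym2.eq_iff]; tauto

lemma bip_no_tri {V : Type*} {G : SimpleGraph V} (hb : _root_.IsBipartite G) {a b c : V}
    (hab : G.Adj a b) (hbc : G.Adj b c) (hac : G.Adj a c) : False := by
  obtain ⟨s, hs⟩ := hb
  rcases hs hab with h1 | h1 <;> rcases hs hbc with h2 | h2 <;> rcases hs hac with h3 | h3 <;>
    tauto

lemma hdeg_of_no_p3 {V : Type*} {G : SimpleGraph V} (hb : _root_.IsBipartite G)
    (hnp3 : ¬ HasInducedP3 G) : ∀ x a b : V, G.Adj x a → G.Adj x b → a = b := by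
  intro x a b h1 h2
  by_contra hab
  have hnadj : ¬ G.Adj a b := fun h => bip_no_tri hb h1.symm h2 h
  exact hnp3 ⟨a, x, b, h1.ne', h2.ne, hab, h1.symm, h2, hnadj⟩

lemma adjoin_tri_free {V : Type*} {G : SimpleGraph V} (hb : _root_.IsBipartite G)
    (hnp3 : ¬ HasInducedP3 G) {u v : V} (huv : u ≠ v) (hnadj : ¬ G.Adj u v) :
    ∀ a b c : V, (adjoinEdge G u v).Adj a b → (adjoinEdge G u v).Adj b c →
      (adjoinEdge G u v).Adj a c → False := by
  have hdeg := hdeg_of_no_p3 hb hnp3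
  have hcom : ∀ x, G.Adj x u → G.Adj x v → False := fun x h1 h2 => huv (hdeg x u v h1 h2)
  intro a b c hab hbc hac
  rw [adjoinEdge_adj] at hab hbc hac
  rcases hab with hab | ⟨h1, hp1⟩ <;>
    rcases hbc with hbc | ⟨h2, hp2⟩ <;>
      rcases hac with hac | ⟨h3, hp3⟩
  all_goals try rcases hp1 with ⟨h4, h5⟩ | ⟨h4, h5⟩
  all_goals try rcases hp2 with ⟨h6, h7⟩ | ⟨h6, h7⟩
  all_goals try rcases hp3 with ⟨h8, h9⟩ | ⟨h8, h9⟩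
  all_goals subst_vars
  all_goals first
    | exact bip_no_tri hb hab hbc hac
    | exact huv rfl
    | exact hab.ne rfl
    | exact hbc.ne rfl
    | exact hac.ne rfl
    | exact hcom c hac.symm hbc.symm
    | exact hcom c hbc.symm hac.symm
    | exact hcom a hab hac
    | exact hcom a hac hab
    | exact hcom b hab.symm hbc
    | exact hcom b hbc hab.symm
    | simp_all

lemma colorable_adjoin {V : Type*} {G : SimpleGraph V} (hb : _root_.IsBipartite G)
    (hnp3 : ¬ HasInducedP3 G) {u v : V} (huv : u ≠ v) (hnadj : ¬ G.Adj u v) :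
    (adjoinEdge G u v).Colorable 2 := by
  classical
  obtain ⟨s, hs⟩ := hb
  have hdeg := hdeg_of_no_p3 ⟨s, hs⟩ hnp3
  refine ⟨Coloring.mk (fun x =>
    if x = u then 0 else if x = v then 1 else if G.Adj u x then 1 else if G.Adj v x then 0
    else if x ∈ s then (0 : Fin 2) else 1) ?_⟩
  intro a b hab
  rw [adjoinEdge_adj] at hab
  rcases hab with hab | ⟨hne, hp⟩
  · by_cases hau : a = u
    · have hab' : G.Adj u b := hau ▸ hab
      have hbu : b ≠ u := hab'.ne'
      have hbv : b ≠ v := fun h => hnadj (h ▸ hab')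
      simp [hau, hbu, hbv, hab']
    · by_cases hav : a = v
      · have hab' : G.Adj v b := hav ▸ hab
        have hbv : b ≠ v := hab'.ne'
        have hbu : b ≠ u := fun h => hnadj (h ▸ hab').symm
        have hnub : ¬ G.Adj u b := fun h => huv (hdeg b u v h.symm hab'.symm)
        simp [hav, hau, hbu, hbv, hnub, hab', huv.symm]
      · by_cases hua : G.Adj u a
        · have hbu : b = u := (hdeg a u b hua.symm hab).symm
          simp [hbu, hau, hav, hua]
        · by_cases hva : G.Adj v a
          · have hbv : b = v := (hdeg a v b hva.symm hab).symm
            simp [hbv, hau, hav, hua, hva, huv.symm]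
          · have hbu : b ≠ u := fun h => hua (h ▸ hab).symm
            have hbv : b ≠ v := fun h => hva (h ▸ hab).symm
            have hnub : ¬ G.Adj u b := fun h => hau (hdeg b u a h.symm hab.symm).symm
            have hnvb : ¬ G.Adj v b := fun h => hav (hdeg b v a h.symm hab.symm).symm
            rcases hs hab with h | h <;>
              simp [hau, hav, hua, hva, hbu, hbv, hnub, hnvb, h.1, h.2]
  · rcases hp with ⟨h4, h5⟩ | ⟨h4, h5⟩ <;> simp [h4, h5, huv, huv.symm]

lemma clNum_eq_two {V : Type*} [Fintype V] (H : SimpleGraph V) (he : ∃ a b, H.Adj a b)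
    (htri : ∀ a b c : V, H.Adj a b → H.Adj b c → H.Adj a c → False) : clNum H = 2 := by
  classical
  obtain ⟨a, b, hab⟩ := he
  have h2 : (2 : ℕ) ∈ {n | ∃ s : Finset V, H.IsNClique n s} := by
    refine ⟨({a, b} : Finset V), ?_, ?_⟩
    · intro x hx y hy hxy
      simp only [Finset.coe_insert, Finset.coe_singleton, Set.mem_insert_iff,
        Set.mem_singleton_iff] at hx hy
      rcases hx with rfl | rfl <;> rcases hy with rfl | rfl <;>
        first | exact hab | exact hab.symm | exact absurd rfl hxy
    · rw [Finset.card_insert_of_notMem (by simp [hab.ne]), Finset.card_singleton]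
  have hub : ∀ n ∈ {n | ∃ s : Finset V, H.IsNClique n s}, n ≤ 2 := by
    rintro n ⟨s, hs⟩
    by_contra hn
    have hlt : 2 < s.card := by rw [hs.2]; omega
    obtain ⟨x, y, z, hx, hy, hz, hxy, hxz, hyz⟩ := Finset.two_lt_card_iff.mp hlt
    exact htri x y z (hs.1 hx hy hxy) (hs.1 hy hz hyz) (hs.1 hx hz hxz)
  exact le_antisymm (csSup_le ⟨2, h2⟩ hub) (le_csSup ⟨2, hub⟩ h2)

lemma chrom_eq_two {V : Type*} (H : SimpleGraph V) (he : ∃ a b, H.Adj a b)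
    (hcol : H.Colorable 2) : H.chromaticNumber = 2 := by
  obtain ⟨a, b, hab⟩ := he
  refine le_antisymm hcol.chromaticNumber_le ?_
  by_contra h
  push_neg at h
  have h1 : H.chromaticNumber ≤ 1 := Order.le_of_lt_add_one (by exact_mod_cast h)
  rw [show ((1 : ℕ∞)) = ((1 : ℕ) : ℕ∞) by norm_cast, chromaticNumber_le_iff_colorable] at h1
  obtain ⟨C⟩ := h1
  exact C.valid hab (Subsingleton.elim _ _)

/-- A finite bipartite graph with at least one edge is χ-unfrozen iff it has no
induced `P₃`, and likewise it is ω-unfrozen iff it has no induced `P₃`. -/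
theorem bipartite_chi_omega_unfrozen_iff_no_inducedP3 {V : Type*} [Fintype V]
    (G : SimpleGraph V) (hb : _root_.IsBipartite G) (h1 : G.edgeSet.Nonempty) :
    ((∀ u v : V, u ≠ v → ¬ G.Adj u v →
        (adjoinEdge G u v).chromaticNumber = G.chromaticNumber) ↔ ¬ HasInducedP3 G) ∧
    ((∀ u v : V, u ≠ v → ¬ G.Adj u v → clNum (adjoinEdge G u v) = clNum G) ↔
      ¬ HasInducedP3 G) := by
  classical
  obtain ⟨aa, bb, hab0⟩ : ∃ a b, G.Adj a b := by
    obtain ⟨e, he⟩ := h1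
    induction e with
    | _ a b => exact ⟨a, b, he⟩
  have hGcl : clNum G = 2 :=
    clNum_eq_two G ⟨aa, bb, hab0⟩ fun a b c h1 h2 h3 => bip_no_tri hb h1 h2 h3
  have hGcol : G.Colorable 2 := by
    obtain ⟨s, hs⟩ := hb
    exact ⟨Coloring.mk (fun x => if x ∈ s then (0 : Fin 2) else 1) (by
      intro a b hadj
      rcases hs hadj with h | h <;> simp [h.1, h.2])⟩
  have hGchrom : G.chromaticNumber = 2 := chrom_eq_two G ⟨aa, bb, hab0⟩ hGcol
  constructor
  · constructor
    · intro hfro hp3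
      obtain ⟨x, y, z, hxy, hyz, hxz, haxy, hayz, hnaxz⟩ := hp3
      have h := hfro x z hxz hnaxz
      rw [hGchrom] at h
      have hcol2 : (adjoinEdge G x z).Colorable 2 :=
        chromaticNumber_le_iff_colorable.mp (by rw [h]; norm_cast)
      obtain ⟨C⟩ := hcol2
      have e1 : (adjoinEdge G x z).Adj x y := (adjoinEdge_adj _ _ _ _ _).mpr (Or.inl haxy)
      have e2 : (adjoinEdge G x z).Adj y z := (adjoinEdge_adj _ _ _ _ _).mpr (Or.inl hayz)
      have e3 : (adjoinEdge G x z).Adj x z :=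
        (adjoinEdge_adj _ _ _ _ _).mpr (Or.inr ⟨hxz, Or.inl ⟨rfl, rfl⟩⟩)
      have n1 : (C x).val ≠ (C y).val := fun hh => C.valid e1 (Fin.val_injective hh)
      have n2 : (C y).val ≠ (C z).val := fun hh => C.valid e2 (Fin.val_injective hh)
      have n3 : (C x).val ≠ (C z).val := fun hh => C.valid e3 (Fin.val_injective hh)
      have l1 : (C x).val < 2 := (C x).isLt
      have l2 : (C y).val < 2 := (C y).isLt
      have l3 : (C z).val < 2 := (C z).isLt
      omega
    · intro hnp3 u v huv hnadj
      rw [hGchrom]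
      refine chrom_eq_two _ ⟨u, v, ?_⟩ (colorable_adjoin hb hnp3 huv hnadj)
      exact (adjoinEdge_adj _ _ _ _ _).mpr (Or.inr ⟨huv, Or.inl ⟨rfl, rfl⟩⟩)
  · constructor
    · intro hfro hp3
      obtain ⟨x, y, z, hxy, hyz, hxz, haxy, hayz, hnaxz⟩ := hp3
      have e1 : (adjoinEdge G x z).Adj x y := (adjoinEdge_adj _ _ _ _ _).mpr (Or.inl haxy)
      have e2 : (adjoinEdge G x z).Adj y z := (adjoinEdge_adj _ _ _ _ _).mpr (Or.inl hayz)
      have e3 : (adjoinEdge G x z).Adj x z :=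
        (adjoinEdge_adj _ _ _ _ _).mpr (Or.inr ⟨hxz, Or.inl ⟨rfl, rfl⟩⟩)
      have h3c : (adjoinEdge G x z).IsNClique 3 ({x, y, z} : Finset V) := by
        refine ⟨?_, ?_⟩
        · intro p hp q hq hpq
          simp only [Finset.coe_insert, Finset.coe_singleton, Set.mem_insert_iff,
            Set.mem_singleton_iff] at hp hq
          rcases hp with rfl | rfl | rfl <;> rcases hq with rfl | rfl | rfl <;>
            first
              | exact absurd rfl hpq
              | exact e1 | exact e1.symm | exact e2 | exact e2.symm
              | exact e3 | exact e3.symm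
        · rw [Finset.card_insert_of_notMem (by simp [hxy, hxz]),
            Finset.card_insert_of_notMem (by simp [hyz]), Finset.card_singleton]
      have hbdd : BddAbove {n | ∃ s : Finset V, (adjoinEdge G x z).IsNClique n s} := by
        refine ⟨Fintype.card V, ?_⟩
        rintro n ⟨s, hs⟩
        exact hs.2 ▸ Finset.card_le_univ s
      have h3 : 3 ≤ clNum (adjoinEdge G x z) := le_csSup hbdd ⟨_, h3c⟩
      rw [hfro x z hxz hnaxz, hGcl] at h3
      omega
    · intro hnp3 u v huv hnadj
      rw [hGcl]
      refine clNum_eq_two _ ⟨u, v, ?_⟩ (adjoin_tri_free hb hnp3 huv hnadj)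
      exact (adjoinEdge_adj _ _ _ _ _).mpr (Or.inr ⟨huv, Or.inl ⟨rfl, rfl⟩⟩)
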